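/- Let v: ℂ[G(3,n)] → ℂ be an algebra homomorphism with v(Δ^{i,i+1,i+2}) = 1 for all i (indices mod n). With Δ_k(i) := v(Δ at {i, i+1, i+k+2}) and Δ^k(i) := v(Δ at {i, i+k+1, i+k+2}), for 3 ≤ k < n−3 the recursion Δ^k(i) = Δ^1(i+k−1)·Δ^{k−1}(i) − Δ_1(i+k−2)·Δ^{k−2}(i) + Δ^{k−3}(i) holds. -/

import Mathlib

open Finset

/-- `(a,b,c)` is cyclically ordered in `Fin n`. -/
def Cyc {n : ℕ} (a b c : Fin n) : Prop :=
  (a < b ∧ b < c) ∨ (b < c ∧ c < a) ∨ (c < a ∧ a < b)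

/-- `a <_x b` iff `(x,a,b)` is cyclically ordered. -/
def Ltx {n : ℕ} (x a b : Fin n) : Prop := Cyc x a b

/-- `a ≤_x b`. -/
def Leqx {n : ℕ} (x a b : Fin n) : Prop := Ltx x a b ∨ a = b

/-- Two subsets `A`, `B` of `Fin n` are crossing. -/
def Crossing {n : ℕ} (A B : Finset (Fin n)) : Prop :=
  ∃ a ∈ A \ B, ∃ c ∈ A \ B, ∃ b ∈ B \ A, ∃ d ∈ B \ A, Cyc a b c ∧ Cyc b c d

/-- `F` is a maximal weakly separated family of triangles in `Fin n`. -/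
def MaxWS {n : ℕ} (F : Finset (Finset (Fin n))) : Prop :=
  (∀ t ∈ F, t.card = 3) ∧
  (∀ s ∈ F, ∀ t ∈ F, ¬ Crossing s t) ∧
  (∀ t : Finset (Fin n), t.card = 3 →
    (∀ s ∈ F, ¬ Crossing t s ∧ ¬ Crossing s t) → t ∈ F)

/-- The subfamily of triangles of `F` containing `x`. -/
def Fx {n : ℕ} (F : Finset (Finset (Fin n))) (x : Fin n) : Finset (Finset (Fin n)) :=
  F.filter (fun t => x ∈ t)

/-- Degree of `a` in the graph `G(F_x)`: the number of triangles of `F`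
containing both `x` and `a`. -/
def degx {n : ℕ} (F : Finset (Finset (Fin n))) (x a : Fin n) : ℕ :=
  ((Fx F x).filter (fun t => a ∈ t)).card

/-- `a` is a vertex of the graph `G(F_x)`. -/
def IsVertex {n : ℕ} (F : Finset (Finset (Fin n))) (x a : Fin n) : Prop :=
  a ≠ x ∧ 1 ≤ degx F x a

/-- `a` is a triangulation point of `G(F_x)`: a vertex of degree at least 2. -/
def IsTriPoint {n : ℕ} (F : Finset (Finset (Fin n))) (x a : Fin n) : Prop :=
  a ≠ x ∧ 2 ≤ degx F x a

/-- `a` is a leaf of `G(F_x)` attached to `b`. -/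
def IsLeafAt {n : ℕ} (F : Finset (Finset (Fin n))) (x a b : Fin n) : Prop :=
  a ≠ x ∧ degx F x a = 1 ∧ ({x, b, a} : Finset (Fin n)) ∈ F

/-- A graph with vertex set `V ⊆ Fin n` (in the induced cyclic order) and edge
set `E` is a triangulation of a polygon: equivalently (as noted in the paper),
`E` is a maximal family of pairwise non-crossing 2-subsets of `V`. -/
def IsPolygonTriangulation {n : ℕ} (V : Set (Fin n)) (E : Set (Finset (Fin n))) : Prop :=
  (∀ e ∈ E, e.card = 2 ∧ ↑e ⊆ V) ∧
  (∀ e ∈ E, ∀ f ∈ E, ¬ Crossing e f) ∧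
  (∀ e : Finset (Fin n), e.card = 2 → ↑e ⊆ V →
    (∀ f ∈ E, ¬ Crossing e f ∧ ¬ Crossing f e) → e ∈ E)

/-- The Plücker ideal: alternating relations together with the Plücker relations. -/
noncomputable def plueckerIdeal (n : ℕ) : Ideal (MvPolynomial (Fin 3 → Fin n) ℂ) :=
  Ideal.span { p | (∃ (f : Fin 3 → Fin n) (σ : Equiv.Perm (Fin 3)),
      p = MvPolynomial.X (f ∘ σ) - ((Equiv.Perm.sign σ : ℤˣ) : ℤ) • MvPolynomial.X f) ∨
    (∃ (g : Fin 2 → Fin n) (h : Fin 4 → Fin n),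
      p = ∑ l : Fin 4, (-1 : MvPolynomial (Fin 3 → Fin n) ℂ) ^ (l : ℕ) *
        MvPolynomial.X ![g 0, g 1, h l] * MvPolynomial.X (h ∘ l.succAbove)) }

/-- The homogeneous coordinate ring `ℂ[G(3,n)]` of the Grassmannian. -/
abbrev GrassRing (n : ℕ) := MvPolynomial (Fin 3 → Fin n) ℂ ⧸ plueckerIdeal n

/-- The Plücker coordinate `Δ^{ijk}`. -/
noncomputable def Pl {n : ℕ} (i j k : Fin n) : GrassRing n :=
  Ideal.Quotient.mk _ (MvPolynomial.X ![i, j, k])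

/-- Median of three elements of `Fin n`. -/
def mid3 {n : ℕ} (i j k : Fin n) : Fin n := max (min i j) (min (max i j) k)

/-- The Plücker coordinate `Δ^{o(i,j,k)}` with the indices ordered increasingly. -/
noncomputable def Plo {n : ℕ} (i j k : Fin n) : GrassRing n :=
  Pl (min i (min j k)) (mid3 i j k) (max i (max j k))

open Fin.NatCast

/-- `Δ_k(i) = v(Δ at {i, i+1, i+k+2})`. -/
noncomputable def Dlow {n : ℕ} [NeZero n] (v : GrassRing n →ₐ[ℂ] ℂ) (k : ℕ) (i : Fin n) : ℂ :=
  v (Plo i (i + 1) (i + ((k + 2 : ℕ) : Fin n)))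

/-- `Δ^k(i) = v(Δ at {i, i+k+1, i+k+2})`. -/
noncomputable def Dup {n : ℕ} [NeZero n] (v : GrassRing n →ₐ[ℂ] ℂ) (k : ℕ) (i : Fin n) : ℂ :=
  v (Plo i (i + ((k + 1 : ℕ) : Fin n)) (i + ((k + 2 : ℕ) : Fin n)))


section AuxUpRec

open MvPolynomial

lemma aux_pl_perm {n : ℕ} (f : Fin 3 → Fin n) (σ : Equiv.Perm (Fin 3)) :
    Ideal.Quotient.mk (plueckerIdeal n) (MvPolynomial.X (f ∘ σ))
      = ((Equiv.Perm.sign σ : ℤˣ) : ℤ) • Ideal.Quotient.mk (plueckerIdeal n) (MvPolynomial.X f) := by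
  rw [← map_zsmul, Ideal.Quotient.eq]
  exact Ideal.subset_span (Or.inl ⟨f, σ, rfl⟩)

lemma aux_pl_rot {n : ℕ} (a b c : Fin n) : Pl a b c = Pl b c a := by
  have h := aux_pl_perm (n := n) ![a, b, c] (finRotate 3)
  have hf : (![a, b, c] : Fin 3 → Fin n) ∘ (finRotate 3) = ![b, c, a] := by
    ext x; fin_cases x <;> rfl
  have hs : Equiv.Perm.sign (finRotate 3) = 1 := by decide
  rw [hf, hs] at h
  exact (by simpa [Pl] using h : Pl b c a = Pl a b c).symm

lemma aux_pl_repeat {n : ℕ} (z a : Fin n) : Pl z a z = 0 := by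
  have h := aux_pl_perm (n := n) ![z, a, z] (Equiv.swap 0 2)
  have hf : (![z, a, z] : Fin 3 → Fin n) ∘ (Equiv.swap 0 2) = ![z, a, z] := by
    ext x; fin_cases x <;> simp [Equiv.swap_apply_of_ne_of_ne]
  have hs : Equiv.Perm.sign (Equiv.swap (0 : Fin 3) 2) = -1 := by decide
  rw [hf, hs] at h
  have h2 : (2 : ℂ) • Pl z a z = 0 := by
    have hxx : Pl z a z = -Pl z a z := by simpa [Pl] using h
    rw [two_smul]
    nth_rewrite 1 [hxx]
    ring
  have h3 := congrArg (fun y => (2⁻¹ : ℂ) • y) h2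
  simpa [smul_smul] using h3

lemma aux_three_term {n : ℕ} (z a b c d : Fin n) :
    Pl z a b * Pl z c d - Pl z a c * Pl z b d + Pl z a d * Pl z b c = 0 := by
  have hmem : (∑ l : Fin 4, (-1 : MvPolynomial (Fin 3 → Fin n) ℂ) ^ (l : ℕ) *
        MvPolynomial.X ![(![z, a] : Fin 2 → Fin n) 0, (![z, a] : Fin 2 → Fin n) 1,
          (![z, b, c, d] : Fin 4 → Fin n) l] *
        MvPolynomial.X ((![z, b, c, d] : Fin 4 → Fin n) ∘ l.succAbove)) ∈ plueckerIdeal n :=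
    Ideal.subset_span (Or.inr ⟨![z, a], ![z, b, c, d], rfl⟩)
  have h0 := Ideal.Quotient.eq_zero_iff_mem.mpr hmem
  rw [Fin.sum_univ_four] at h0
  have e0 : (![z, b, c, d] : Fin 4 → Fin n) ∘ (0 : Fin 4).succAbove = ![b, c, d] := by
    ext x; fin_cases x <;> rfl
  have e1 : (![z, b, c, d] : Fin 4 → Fin n) ∘ (1 : Fin 4).succAbove = ![z, c, d] := by
    ext x; fin_cases x <;> rfl
  have e2 : (![z, b, c, d] : Fin 4 → Fin n) ∘ (2 : Fin 4).succAbove = ![z, b, d] := by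
    ext x; fin_cases x <;> rfl
  have e3 : (![z, b, c, d] : Fin 4 → Fin n) ∘ (3 : Fin 4).succAbove = ![z, b, c] := by
    ext x; fin_cases x <;> rfl
  rw [e0, e1, e2, e3] at h0
  simp only [Matrix.cons_val_zero, Matrix.cons_val_one, Matrix.head_cons, Matrix.cons_val_two,
    Matrix.tail_cons, Matrix.cons_val_three, Fin.isValue, Fin.val_zero, Fin.val_one, Fin.val_two,
    pow_zero, pow_one, one_mul, map_add, map_mul, map_sub, map_neg, map_pow, map_one] at h0
  have hv3 : ((3 : Fin 4) : ℕ) = 3 := rfl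
  rw [hv3] at h0
  norm_num at h0
  have hz := aux_pl_repeat z a
  simp only [Pl] at hz ⊢
  linear_combination (-1 : GrassRing n) * h0
    + (Ideal.Quotient.mk (plueckerIdeal n) (MvPolynomial.X ![b, c, d])) * hz

lemma aux_plo_eq_pl {n : ℕ} {a b c : Fin n} (h : Cyc a b c) : Plo a b c = Pl a b c := by
  rcases h with ⟨h1, h2⟩ | ⟨h1, h2⟩ | ⟨h1, h2⟩
  · have e1 : min a (min b c) = a := by
      rw [min_eq_left h2.le, min_eq_left h1.le]
    have e2 : mid3 a b c = b := by
      rw [mid3, min_eq_left h1.le, max_eq_right h1.le, min_eq_left h2.le, max_eq_right h1.le]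
    have e3 : max a (max b c) = c := by
      rw [max_eq_right h2.le, max_eq_right (h1.trans h2).le]
    rw [Plo, e1, e2, e3]
  · have e1 : min a (min b c) = b := by
      rw [min_eq_left h1.le, min_eq_right (h1.trans h2).le]
    have e2 : mid3 a b c = c := by
      rw [mid3, min_eq_right (h1.trans h2).le, max_eq_left (h1.trans h2).le,
        min_eq_right h2.le, max_eq_right h1.le]
    have e3 : max a (max b c) = a := by
      rw [max_eq_right h1.le, max_eq_left h2.le]
    rw [Plo, e1, e2, e3]
    exact (aux_pl_rot a b c).symm
  · have e1 : min a (min b c) = c := by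
      rw [min_eq_right (h1.trans h2).le, min_eq_right h1.le]
    have e2 : mid3 a b c = a := by
      rw [mid3, min_eq_left h2.le, max_eq_right h2.le, min_eq_right (h1.trans h2).le,
        max_eq_left h1.le]
    have e3 : max a (max b c) = b := by
      rw [max_eq_left (h1.trans h2).le, max_eq_right h2.le]
    rw [Plo, e1, e2, e3]
    exact aux_pl_rot c a b

lemma aux_val_add_natCast {n : ℕ} [NeZero n] (i : Fin n) (p : ℕ) (hp : p < n) :
    (i + (p : Fin n)).val = (i.val + p) % n := by
  rw [Fin.add_def, Fin.val_natCast, Nat.mod_eq_of_lt hp]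

lemma aux_mod_cases {n : ℕ} (a : ℕ) (h : a < 2 * n) (hn : 0 < n) :
    (a % n = a ∧ a < n) ∨ (a % n = a - n ∧ n ≤ a) := by
  rcases Nat.lt_or_ge a n with h'|h'
  · exact Or.inl ⟨Nat.mod_eq_of_lt h', h'⟩
  · refine Or.inr ⟨?_, h'⟩
    rw [Nat.mod_eq_sub_mod h', Nat.mod_eq_of_lt (by omega)]

lemma aux_cyc_of_lt {n : ℕ} [NeZero n] (i : Fin n) (p q r : ℕ)
    (hpq : p < q) (hqr : q < r) (hr : r < n) :
    Cyc (i + (p : Fin n)) (i + (q : Fin n)) (i + (r : Fin n)) := by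
  have hn : 0 < n := Nat.pos_of_ne_zero (NeZero.ne n)
  have hi : i.val < n := i.isLt
  have vp := aux_val_add_natCast i p (by omega)
  have vq := aux_val_add_natCast i q (by omega)
  have vr := aux_val_add_natCast i r (by omega)
  have mp := aux_mod_cases (i.val + p) (by omega) hn
  have mq := aux_mod_cases (i.val + q) (by omega) hn
  have mr := aux_mod_cases (i.val + r) (by omega) hn
  simp only [Cyc, Fin.lt_def, vp, vq, vr]
  rcases mp with ⟨mp, mp'⟩|⟨mp, mp'⟩ <;> rcases mq with ⟨mq, mq'⟩|⟨mq, mq'⟩ <;>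
    rcases mr with ⟨mr, mr'⟩|⟨mr, mr'⟩ <;> rw [mp, mq, mr] <;> omega

/-- `v` of the Plücker coordinate at offsets `p, q, r` from `i`. -/
noncomputable def Wv {n : ℕ} [NeZero n] (v : GrassRing n →ₐ[ℂ] ℂ) (i : Fin n) (p q r : ℕ) : ℂ :=
  v (Pl (i + (p : Fin n)) (i + (q : Fin n)) (i + (r : Fin n)))

lemma Wv_rot {n : ℕ} [NeZero n] (v : GrassRing n →ₐ[ℂ] ℂ) (i : Fin n) (p q r : ℕ) :
    Wv v i p q r = Wv v i q r p := by
  unfold Wv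
  rw [aux_pl_rot]

lemma Wv_three {n : ℕ} [NeZero n] (v : GrassRing n →ₐ[ℂ] ℂ) (i : Fin n) (z a b c d : ℕ) :
    Wv v i z a b * Wv v i z c d - Wv v i z a c * Wv v i z b d
      + Wv v i z a d * Wv v i z b c = 0 := by
  unfold Wv
  have h := aux_three_term (i + (z : Fin n)) (i + (a : Fin n)) (i + (b : Fin n))
    (i + (c : Fin n)) (i + (d : Fin n))
  have h2 := congrArg v h
  simpa using h2

lemma Wv_plo {n : ℕ} [NeZero n] (v : GrassRing n →ₐ[ℂ] ℂ) (i : Fin n) (p q r : ℕ)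
    (hpq : p < q) (hqr : q < r) (hr : r < n) :
    v (Plo (i + (p : Fin n)) (i + (q : Fin n)) (i + (r : Fin n))) = Wv v i p q r := by
  rw [aux_plo_eq_pl (aux_cyc_of_lt i p q r hpq hqr hr)]
  rfl

lemma Wv_one {n : ℕ} [NeZero n] (v : GrassRing n →ₐ[ℂ] ℂ)
    (h1 : ∀ j : Fin n, v (Plo j (j + 1) (j + 2)) = 1) (i : Fin n) (j : ℕ) (hj : j + 2 < n) :
    Wv v i j (j + 1) (j + 2) = 1 := by
  have h := h1 (i + (j : Fin n))
  have e1 : (i + (j : Fin n)) + 1 = i + ((j + 1 : ℕ) : Fin n) := by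
    push_cast
    rw [add_assoc]
  have e2 : (i + (j : Fin n)) + 2 = i + ((j + 2 : ℕ) : Fin n) := by
    push_cast
    rw [add_assoc]
  rw [e1, e2, Wv_plo v i j (j + 1) (j + 2) (by omega) (by omega) hj] at h
  exact h

end AuxUpRec

/-- Recursion for the `Δ^k(i)`. -/
theorem up_recursion {n : ℕ} [NeZero n] (v : GrassRing n →ₐ[ℂ] ℂ)
    (h1 : ∀ i : Fin n, v (Plo i (i + 1) (i + 2)) = 1)
    (k : ℕ) (hk : 3 ≤ k) (hk' : k < n - 3) (i : Fin n) :
    Dup v k i = Dup v 1 (i + ((k - 1 : ℕ) : Fin n)) * Dup v (k - 1) i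
      - Dlow v 1 (i + ((k - 2 : ℕ) : Fin n)) * Dup v (k - 2) i
      + Dup v (k - 3) i := by
  have hn : 0 < n := Nat.pos_of_ne_zero (NeZero.ne n)
  have hn7 : 7 ≤ n := by omega
  have hzero : i + ((0 : ℕ) : Fin n) = i := by simp
  -- convert the six Plücker values into `Wv` form
  have gL : Dup v k i = Wv v i 0 (k + 1) (k + 2) := by
    rw [Dup]
    nth_rewrite 1 [← hzero]
    exact Wv_plo v i 0 (k + 1) (k + 2) (by omega) (by omega) (by omega)
  have g2 : Dup v 1 (i + ((k - 1 : ℕ) : Fin n)) = Wv v i (k - 1) (k + 1) (k + 2) := by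
    rw [Dup, show (1 : ℕ) + 1 = 2 from rfl, show (1 : ℕ) + 2 = 3 from rfl,
      add_assoc, ← Nat.cast_add, add_assoc, ← Nat.cast_add,
      show k - 1 + 2 = k + 1 from by omega, show k - 1 + 3 = k + 2 from by omega]
    exact Wv_plo v i (k - 1) (k + 1) (k + 2) (by omega) (by omega) (by omega)
  have g3 : Dup v (k - 1) i = Wv v i 0 k (k + 1) := by
    rw [Dup, show k - 1 + 1 = k from by omega, show k - 1 + 2 = k + 1 from by omega]
    nth_rewrite 1 [← hzero]
    exact Wv_plo v i 0 k (k + 1) (by omega) (by omega) (by omega)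
  have g4 : Dlow v 1 (i + ((k - 2 : ℕ) : Fin n)) = Wv v i (k - 2) (k - 1) (k + 1) := by
    rw [Dlow, show (1 : ℕ) + 2 = 3 from rfl]
    have em : i + ((k - 2 : ℕ) : Fin n) + 1 = i + ((k - 1 : ℕ) : Fin n) := by
      rw [show (1 : Fin n) = ((1 : ℕ) : Fin n) from (Nat.cast_one).symm, add_assoc,
        ← Nat.cast_add, show k - 2 + 1 = k - 1 from by omega]
    rw [em, add_assoc, ← Nat.cast_add, show k - 2 + 3 = k + 1 from by omega]
    exact Wv_plo v i (k - 2) (k - 1) (k + 1) (by omega) (by omega) (by omega)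
  have g5 : Dup v (k - 2) i = Wv v i 0 (k - 1) k := by
    rw [Dup, show k - 2 + 1 = k - 1 from by omega, show k - 2 + 2 = k from by omega]
    nth_rewrite 1 [← hzero]
    exact Wv_plo v i 0 (k - 1) k (by omega) (by omega) (by omega)
  have g6 : Dup v (k - 3) i = Wv v i 0 (k - 2) (k - 1) := by
    rw [Dup, show k - 3 + 1 = k - 2 from by omega, show k - 3 + 2 = k - 1 from by omega]
    nth_rewrite 1 [← hzero]
    exact Wv_plo v i 0 (k - 2) (k - 1) (by omega) (by omega) (by omega)
  rw [gL, g2, g3, g4, g5, g6]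
  -- the units
  have u1 : Wv v i (k - 1) k (k + 1) = 1 := by
    have h := Wv_one v h1 i (k - 1) (by omega)
    rwa [show k - 1 + 1 = k from by omega, show k - 1 + 2 = k + 1 from by omega] at h
  have u2 : Wv v i k (k + 1) (k + 2) = 1 := Wv_one v h1 i k (by omega)
  have u3 : Wv v i (k - 2) (k - 1) k = 1 := by
    have h := Wv_one v h1 i (k - 2) (by omega)
    rwa [show k - 2 + 1 = k - 1 from by omega, show k - 2 + 2 = k from by omega] at h
  -- the two three-term relations
  have E1 := Wv_three v i (k + 1) (k + 2) 0 (k - 1) k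
  rw [show Wv v i (k + 1) (k + 2) 0 = Wv v i 0 (k + 1) (k + 2) from
      (Wv_rot v i (k + 1) (k + 2) 0).trans (Wv_rot v i (k + 2) 0 (k + 1)),
    show Wv v i (k + 1) (k - 1) k = Wv v i (k - 1) k (k + 1) from
      Wv_rot v i (k + 1) (k - 1) k,
    show Wv v i (k + 1) (k + 2) (k - 1) = Wv v i (k - 1) (k + 1) (k + 2) from
      (Wv_rot v i (k + 1) (k + 2) (k - 1)).trans (Wv_rot v i (k + 2) (k - 1) (k + 1)),
    show Wv v i (k + 1) 0 k = Wv v i 0 k (k + 1) from Wv_rot v i (k + 1) 0 k,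
    show Wv v i (k + 1) (k + 2) k = Wv v i k (k + 1) (k + 2) from
      (Wv_rot v i (k + 1) (k + 2) k).trans (Wv_rot v i (k + 2) k (k + 1)),
    show Wv v i (k + 1) 0 (k - 1) = Wv v i 0 (k - 1) (k + 1) from
      Wv_rot v i (k + 1) 0 (k - 1),
    u1, u2] at E1
  have E2 := Wv_three v i (k - 1) k (k + 1) 0 (k - 2)
  rw [show Wv v i (k - 1) k (k + 1) = Wv v i (k - 1) k (k + 1) from rfl,
    show Wv v i (k - 1) 0 (k - 2) = Wv v i 0 (k - 2) (k - 1) from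
      Wv_rot v i (k - 1) 0 (k - 2),
    show Wv v i (k - 1) k 0 = Wv v i 0 (k - 1) k from
      (Wv_rot v i (k - 1) k 0).trans (Wv_rot v i k 0 (k - 1)),
    show Wv v i (k - 1) (k + 1) (k - 2) = Wv v i (k - 2) (k - 1) (k + 1) from
      (Wv_rot v i (k - 1) (k + 1) (k - 2)).trans (Wv_rot v i (k + 1) (k - 2) (k - 1)),
    show Wv v i (k - 1) k (k - 2) = Wv v i (k - 2) (k - 1) k from
      (Wv_rot v i (k - 1) k (k - 2)).trans (Wv_rot v i k (k - 2) (k - 1)),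
    show Wv v i (k - 1) (k + 1) 0 = Wv v i 0 (k - 1) (k + 1) from
      (Wv_rot v i (k - 1) (k + 1) 0).trans (Wv_rot v i (k + 1) 0 (k - 1)),
    u1, u3] at E2
  linear_combination E1 - E2
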